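/- arXiv:2506.09318 — 2 statements merged into one kernel-verified Lean document; each statement's English description precedes it below -/
import Mathlib

section
/- Let d ∈ ℕ and let P, Q ∈ ℂ[x] with deg P ≤ d and deg Q ≤ d be polynomials satisfying |P(x)|² + |Q(x)|² = 1 for every x ∈ ℂ with |x| = 1. Then there exist θ, φ ∈ ℝ^{d+1} and λ ∈ ℝ such that for every N ≥ 1 and every N×N unitary matrix U, the top-left N×N block of (∏_{j=1}^{d} R(θ_j, φ_j, 0)·A) · R(θ_0, φ_0, λ) equals P(U) and the bottom-left N×N block equals Q(U), where A = |0⟩⟨0| ⊗ U + |1⟩⟨1| ⊗ I_N. -/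
open Matrix Kronecker

/-- The single-qubit rotation `R(θ,φ,λ)` tensored with the `N×N` identity:
`R(θ,φ,λ) = [[e^{i(λ+φ)}cos θ, e^{iφ} sin θ], [e^{iλ} sin θ, -cos θ]] ⊗ I_N`. -/
noncomputable def gqspR (N : ℕ) (θ φ lam : ℝ) : Matrix (Fin 2 × Fin N) (Fin 2 × Fin N) ℂ :=
  (!![Complex.exp (Complex.I * ((lam : ℂ) + (φ : ℂ))) * (Real.cos θ : ℂ),
      Complex.exp (Complex.I * (φ : ℂ)) * (Real.sin θ : ℂ);
      Complex.exp (Complex.I * (lam : ℂ)) * (Real.sin θ : ℂ),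
      -(Real.cos θ : ℂ)] : Matrix (Fin 2) (Fin 2) ℂ) ⊗ₖ (1 : Matrix (Fin N) (Fin N) ℂ)

/-- The anti-controlled evolution operator `A = |0⟩⟨0| ⊗ U + |1⟩⟨1| ⊗ I_N`. -/
noncomputable def gqspA (N : ℕ) (U : Matrix (Fin N) (Fin N) ℂ) :
    Matrix (Fin 2 × Fin N) (Fin 2 × Fin N) ℂ :=
  (!![1, 0; 0, 0] : Matrix (Fin 2) (Fin 2) ℂ) ⊗ₖ U +
    (!![0, 0; 0, 1] : Matrix (Fin 2) (Fin 2) ℂ) ⊗ₖ (1 : Matrix (Fin N) (Fin N) ℂ)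

/-- The interleaved GQSP circuit `(∏_{j=1}^d R(θ_j,φ_j,0) A) R(θ_0,φ_0,λ)`
(the factor with the largest index `j = d` acting first on the right of the
`j = 1, …, d` factors, and `R(θ_0,φ_0,λ)` acting first of all). -/
noncomputable def gqspCircuit (N d : ℕ) (U : Matrix (Fin N) (Fin N) ℂ)
    (θ φ : Fin (d + 1) → ℝ) (lam : ℝ) : Matrix (Fin 2 × Fin N) (Fin 2 × Fin N) ℂ :=
  (List.ofFn fun j : Fin d => gqspR N (θ j.succ) (φ j.succ) 0 * gqspA N U).prod *
    gqspR N (θ 0) (φ 0) lam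

/-- The top-left `N×N` block of a `2N×2N` block matrix. -/
def block00 (N : ℕ) (W : Matrix (Fin 2 × Fin N) (Fin 2 × Fin N) ℂ) :
    Matrix (Fin N) (Fin N) ℂ :=
  Matrix.of fun i j => W (0, i) (0, j)

/-- The bottom-left `N×N` block of a `2N×2N` block matrix. -/
def block10 (N : ℕ) (W : Matrix (Fin 2 × Fin N) (Fin 2 × Fin N) ℂ) :
    Matrix (Fin N) (Fin N) ℂ :=
  Matrix.of fun i j => W (1, i) (0, j)

section GQSPAux

open Complex Polynomial Finset

lemma circle_infinite : {x : ℂ | ‖x‖ = 1}.Infinite := by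
  apply Set.infinite_of_injective_forall_mem (f := fun n : ℕ => Complex.exp ((n : ℝ) * Complex.I))
  case hi =>
    intro n m h
    rw [Complex.exp_eq_exp_iff_exists_int] at h
    obtain ⟨k, hk⟩ := h
    have hC : ((n : ℂ)) * Complex.I = ((m : ℂ) + k * (2 * Real.pi)) * Complex.I := by
      push_cast at hk ⊢; linear_combination hk
    have hR : (n : ℝ) = (m : ℝ) + k * (2 * Real.pi) := by
      have := mul_right_cancel₀ Complex.I_ne_zero hC
      exact_mod_cast congrArg Complex.re this
    rcases eq_or_ne k 0 with hk0 | hk0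
    · subst hk0; simp at hR; exact_mod_cast hR
    · exfalso
      apply irrational_pi
      refine ⟨((n : ℚ) - m) / (2 * k), ?_⟩
      have h2k : ((k:ℝ)) ≠ 0 := Int.cast_ne_zero.mpr hk0
      push_cast
      field_simp
      linarith [hR]
  case hf =>
    intro n
    simpa using Complex.norm_exp_ofReal_mul_I (n:ℝ)

lemma coeff_orth (n : ℕ) (hn : 1 ≤ n) (P Q : Polynomial ℂ)
    (hPd : P.natDegree ≤ n) (hQd : Q.natDegree ≤ n)
    (hPQ : ∀ x : ℂ, ‖x‖ = 1 →
      ‖P.eval x‖ ^ 2 + ‖Q.eval x‖ ^ 2 = 1) :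
    P.coeff n * (starRingEnd ℂ) (P.coeff 0) + Q.coeff n * (starRingEnd ℂ) (Q.coeff 0) = 0 := by
  set c : ℕ → ℕ → ℂ := fun j k =>
    P.coeff j * (starRingEnd ℂ) (P.coeff k) + Q.coeff j * (starRingEnd ℂ) (Q.coeff k) with hc
  set H : Polynomial ℂ :=
    ∑ j ∈ range (n+1), ∑ k ∈ range (n+1), C (c j k) * X ^ (n + j - k) with hH
  have hEval : ∀ x : ℂ, ‖x‖ = 1 → H.eval x = x ^ n := by
    intro x hx
    have hxc : x * (starRingEnd ℂ) x = 1 := by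
      rw [Complex.mul_conj]
      norm_cast
      rw [← Complex.sq_norm, hx]; norm_num
    have key : ∀ j k : ℕ, k ≤ n → x ^ (n + j - k) = x ^ n * x ^ j * ((starRingEnd ℂ) x) ^ k := by
      intro j k hk
      have h1 : x ^ (n + j) = x ^ (n + j - k) * x ^ k := by
        rw [← pow_add]; congr 1; omega
      calc x ^ (n + j - k) = x ^ (n + j - k) * (x * (starRingEnd ℂ) x) ^ k := by
            rw [hxc, one_pow, mul_one]
        _ = (x ^ (n + j - k) * x ^ k) * ((starRingEnd ℂ) x) ^ k := by rw [mul_pow]; ring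
        _ = x ^ n * x ^ j * ((starRingEnd ℂ) x) ^ k := by rw [← h1, pow_add]
    have hP : P.eval x = ∑ j ∈ range (n+1), P.coeff j * x ^ j :=
      Polynomial.eval_eq_sum_range' (by omega) x
    have hQ : Q.eval x = ∑ j ∈ range (n+1), Q.coeff j * x ^ j :=
      Polynomial.eval_eq_sum_range' (by omega) x
    have habs : P.eval x * (starRingEnd ℂ) (P.eval x) + Q.eval x * (starRingEnd ℂ) (Q.eval x) = 1 := by
      rw [Complex.mul_conj, Complex.mul_conj, ← Complex.sq_norm, ← Complex.sq_norm]
      norm_cast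
      exact hPQ x hx
    calc H.eval x
        = ∑ j ∈ range (n+1), ∑ k ∈ range (n+1), c j k * x ^ (n + j - k) := by
          simp [hH, eval_finset_sum]
      _ = ∑ j ∈ range (n+1), ∑ k ∈ range (n+1),
            (P.coeff j * x ^ j * ((starRingEnd ℂ) (P.coeff k) * ((starRingEnd ℂ) x) ^ k)
             + Q.coeff j * x ^ j * ((starRingEnd ℂ) (Q.coeff k) * ((starRingEnd ℂ) x) ^ k)) * x ^ n := by
          refine Finset.sum_congr rfl fun j hj => Finset.sum_congr rfl fun k hk => ?_
          rw [key j k (by simp at hk; omega), hc]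
          ring
      _ = (P.eval x * (starRingEnd ℂ) (P.eval x) + Q.eval x * (starRingEnd ℂ) (Q.eval x)) * x ^ n := by
          rw [hP, hQ, _root_.map_sum, _root_.map_sum]
          simp only [_root_.map_mul, _root_.map_pow]
          rw [Finset.sum_mul_sum, Finset.sum_mul_sum]
          rw [← Finset.sum_add_distrib, Finset.sum_mul]
          refine Finset.sum_congr rfl fun j hj => ?_
          rw [← Finset.sum_add_distrib, Finset.sum_mul]
      _ = x ^ n := by rw [habs, one_mul]
  have hHX : H = X ^ n := by
    apply Polynomial.eq_of_infinite_eval_eq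
    apply Set.Infinite.mono _ circle_infinite
    intro x hx
    simp only [Set.mem_setOf_eq] at hx ⊢
    rw [hEval x hx, eval_pow, eval_X]
  have h1 : H.coeff (2*n) = c n 0 := by
    rw [hH, finset_sum_coeff, Finset.sum_eq_single n]
    · rw [finset_sum_coeff, Finset.sum_eq_single 0]
      · rw [coeff_C_mul, coeff_X_pow, if_pos (by omega), mul_one]
      · intro k hk hk0
        rw [coeff_C_mul, coeff_X_pow, if_neg (by simp at hk; omega), mul_zero]
      · intro h; exact absurd (by simp : (0:ℕ) ∈ Finset.range (n+1)) h
    · intro j hj hjn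
      rw [finset_sum_coeff]
      apply Finset.sum_eq_zero; intro k hk
      rw [coeff_C_mul, coeff_X_pow, if_neg (by simp at hj hk; omega), mul_zero]
    · intro h; exact absurd (by simp : n ∈ Finset.range (n+1)) h
  have h2 : (Polynomial.X ^ n : Polynomial ℂ).coeff (2*n) = 0 := by
    rw [coeff_X_pow, if_neg (by omega)]
  rw [hHX, h2] at h1
  exact h1.symm

lemma exists_exp_neg (w : ℂ) (hw : ‖w‖ = 1) :
    ∃ p : ℝ, Complex.exp (-(Complex.I * p)) = w := by
  refine ⟨-w.arg, ?_⟩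
  push_cast
  rw [show -(Complex.I * (-(w.arg:ℂ))) = (w.arg : ℂ) * Complex.I by ring]
  have := Complex.norm_mul_exp_arg_mul_I w
  rw [hw] at this; simpa using this

lemma abs_ofReal_abs (z : ℂ) : ‖((‖z‖ : ℝ) : ℂ)‖ = ‖z‖ := by
  rw [Complex.norm_real, Real.norm_eq_abs]; exact _root_.abs_of_nonneg (norm_nonneg z)

lemma solveCS (a b : ℂ) : ∃ t p : ℝ,
    Complex.exp (-(Complex.I * p)) * Real.sin t * a = (Real.cos t : ℂ) * b := by
  rcases eq_or_ne b 0 with hb | hb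
  · exact ⟨0, 0, by simp [hb]⟩
  rcases eq_or_ne a 0 with ha | ha
  · exact ⟨Real.pi/2, 0, by simp [ha]⟩
  · set w : ℂ := (b * (‖a‖ : ℂ)) / (a * (‖b‖ : ℂ)) with hwdef
    have ha' : ‖a‖ ≠ 0 := by simpa using ha
    have hb' : ‖b‖ ≠ 0 := by simpa using hb
    have habs : ‖w‖ = 1 := by
      rw [hwdef, norm_div, norm_mul, norm_mul, abs_ofReal_abs, abs_ofReal_abs, mul_comm, div_self]
      exact mul_ne_zero ha' hb'
    obtain ⟨p, hp⟩ := exists_exp_neg w habs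
    set t := Real.arctan (‖b‖ / ‖a‖) with ht
    refine ⟨t, p, ?_⟩
    have hs : Real.sqrt (1 + (‖b‖ / ‖a‖)^2) ≠ 0 := by positivity
    have htan : Real.sin t * ‖a‖ = Real.cos t * ‖b‖ := by
      rw [ht, Real.cos_arctan, Real.sin_arctan]; field_simp
    set sC : ℂ := ((Real.sin t : ℝ) : ℂ) with hsC
    set cC : ℂ := ((Real.cos t : ℝ) : ℂ) with hcC
    have htanC : sC * (‖a‖ : ℂ) = cC * (‖b‖ : ℂ) := by
      rw [hsC, hcC]; exact_mod_cast congrArg (fun r : ℝ => (r : ℂ)) htan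
    rw [hp, hwdef]
    have habC : ((‖b‖ : ℝ) : ℂ) ≠ 0 := by exact_mod_cast hb'
    field_simp
    linear_combination htanC

lemma solveSC (a b : ℂ) : ∃ t p : ℝ,
    Complex.exp (-(Complex.I * p)) * Real.cos t * a = (Real.sin t : ℂ) * b := by
  obtain ⟨t, p, h⟩ := solveCS a b
  exact ⟨Real.pi/2 - t, p, by rwa [Real.cos_pi_div_two_sub, Real.sin_pi_div_two_sub]⟩

lemma exp_mul_conj (p : ℝ) :
    Complex.exp (-(Complex.I * p)) * (starRingEnd ℂ) (Complex.exp (-(Complex.I * p))) = 1 := by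
  rw [← Complex.exp_conj, ← Complex.exp_add]
  have : -(Complex.I * p) + (starRingEnd ℂ) (-(Complex.I * p)) = 0 := by
    simp [Complex.conj_ofReal]
  rw [this, Complex.exp_zero]

lemma angle_exists (p0 q0 pd qd : ℂ)
    (horth : pd * (starRingEnd ℂ) p0 + qd * (starRingEnd ℂ) q0 = 0) :
    ∃ t p : ℝ,
      Complex.exp (-(Complex.I * p)) * Real.cos t * p0 + (Real.sin t : ℂ) * q0 = 0 ∧
      Complex.exp (-(Complex.I * p)) * Real.sin t * pd - (Real.cos t : ℂ) * qd = 0 := by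
  by_cases h0 : p0 = 0 ∧ q0 = 0
  · obtain ⟨t, p, h⟩ := solveCS pd qd
    refine ⟨t, p, ?_, ?_⟩
    · simp [h0.1, h0.2]
    · linear_combination h
  · obtain ⟨t, p, h1⟩ := solveSC p0 (-q0)
    refine ⟨t, p, by linear_combination h1, ?_⟩
    set e := Complex.exp (-(Complex.I * p)) with he_def
    have he : e * (starRingEnd ℂ) e = 1 := exp_mul_conj p
    have h1' : e * Real.cos t * p0 + (Real.sin t : ℂ) * q0 = 0 := by linear_combination h1
    rcases eq_or_ne p0 0 with hp0 | hp0
    · have hq0 : q0 ≠ 0 := fun h => h0 ⟨hp0, h⟩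
      have hs : ((Real.sin t : ℝ) : ℂ) = 0 := by
        have := h1'
        rw [hp0, mul_zero, zero_add, mul_eq_zero] at this
        exact this.resolve_right hq0
      have hqd : qd = 0 := by
        have hcq0 : (starRingEnd ℂ) q0 ≠ 0 := by simpa using hq0
        have := horth
        rw [hp0, _root_.map_zero, mul_zero, zero_add, mul_eq_zero] at this
        exact this.resolve_right hcq0
      rw [hs, hqd]; ring
    · have hc1 : (starRingEnd ℂ) e * Real.cos t * (starRingEnd ℂ) p0
          + (Real.sin t : ℂ) * (starRingEnd ℂ) q0 = 0 := by
        have := congrArg (starRingEnd ℂ) h1'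
        simp only [_root_.map_add, _root_.map_mul, _root_.map_zero, Complex.conj_ofReal] at this
        exact this
      have hcp0 : (starRingEnd ℂ) p0 ≠ 0 := by simpa using hp0
      have key : (Complex.exp (-(Complex.I * p)) * Real.sin t * pd - (Real.cos t : ℂ) * qd)
          * (starRingEnd ℂ) p0 = 0 := by
        linear_combination e * (Real.sin t : ℂ) * horth - e * qd * hc1
          + (Real.cos t : ℂ) * qd * ((starRingEnd ℂ) p0) * he
      exact (mul_eq_zero.mp key).resolve_right hcp0

/-- the embedding `Fin (d+1) → Fin (d+2)` skipping index 1 -/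
def gqShift (d : ℕ) : Fin (d + 1) → Fin (d + 2) :=
  Fin.cases 0 (fun j => j.succ.succ)

def gqUnshift (d : ℕ) (a : ℝ) (f : Fin (d+1) → ℝ) : Fin (d+2) → ℝ :=
  Fin.cases (f 0) (fun j : Fin (d+1) => Fin.cases a (fun k : Fin d => f k.succ) j)

lemma gqUnshift_shift (d : ℕ) (a : ℝ) (f : Fin (d+1) → ℝ) (j : Fin (d+1)) :
    gqUnshift d a f (gqShift d j) = f j := by
  induction j using Fin.cases with
  | zero => simp [gqUnshift, gqShift]
  | succ k => simp [gqUnshift, gqShift]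

lemma gqUnshift_one (d : ℕ) (a : ℝ) (f : Fin (d+1) → ℝ) :
    gqUnshift d a f 1 = a := by
  rw [show (1 : Fin (d+2)) = Fin.succ 0 from (Fin.succ_zero_eq_one).symm]
  simp only [gqUnshift, Fin.cases_succ, Fin.cases_zero]

lemma gqspCircuit_zero (N : ℕ) (U : Matrix (Fin N) (Fin N) ℂ) (θ φ : Fin 1 → ℝ) (lam : ℝ) :
    gqspCircuit N 0 U θ φ lam = gqspR N (θ 0) (φ 0) lam := by
  simp [gqspCircuit]

lemma gqspCircuit_succ (N d : ℕ) (U : Matrix (Fin N) (Fin N) ℂ)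
    (θ φ : Fin (d + 2) → ℝ) (lam : ℝ) :
    gqspCircuit N (d+1) U θ φ lam =
      gqspR N (θ 1) (φ 1) 0 * (gqspA N U *
        gqspCircuit N d U (fun j => θ (gqShift d j)) (fun j => φ (gqShift d j)) lam) := by
  unfold gqspCircuit
  rw [List.ofFn_succ, List.prod_cons]
  have h1 : ∀ j : Fin d, gqShift d j.succ = j.succ.succ := fun j => by simp [gqShift]
  have h0 : gqShift d (0 : Fin (d+1)) = 0 := by simp [gqShift]
  simp only [h1, h0, Fin.succ_zero_eq_one]
  rw [mul_assoc, mul_assoc]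

lemma block00_R (N : ℕ) (t p l : ℝ) :
    block00 N (gqspR N t p l) =
      (Complex.exp (Complex.I * ((l:ℂ) + (p:ℂ))) * (Real.cos t : ℂ)) • (1 : Matrix (Fin N) (Fin N) ℂ) := by
  ext i j
  simp [block00, gqspR, Matrix.kroneckerMap_apply, Matrix.smul_apply, Matrix.one_apply]

lemma block10_R (N : ℕ) (t p l : ℝ) :
    block10 N (gqspR N t p l) =
      (Complex.exp (Complex.I * (l:ℂ)) * (Real.sin t : ℂ)) • (1 : Matrix (Fin N) (Fin N) ℂ) := by
  ext i j
  simp [block10, gqspR, Matrix.kroneckerMap_apply, Matrix.smul_apply, Matrix.one_apply]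

lemma block00_RA (N : ℕ) (t p : ℝ) (U : Matrix (Fin N) (Fin N) ℂ)
    (W : Matrix (Fin 2 × Fin N) (Fin 2 × Fin N) ℂ) :
    block00 N (gqspR N t p 0 * (gqspA N U * W)) =
      (Complex.exp (Complex.I * (p:ℂ)) * (Real.cos t : ℂ)) • (U * block00 N W) +
      (Complex.exp (Complex.I * (p:ℂ)) * (Real.sin t : ℂ)) • block10 N W := by
  ext i j
  simp [block00, block10, gqspR, gqspA, Matrix.mul_apply, Fintype.sum_prod_type,
    Fin.sum_univ_two, Matrix.kroneckerMap_apply, Matrix.one_apply, Matrix.smul_apply,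
    Matrix.add_apply, Finset.mul_sum, Finset.sum_add_distrib, mul_assoc]

lemma block10_RA (N : ℕ) (t p : ℝ) (U : Matrix (Fin N) (Fin N) ℂ)
    (W : Matrix (Fin 2 × Fin N) (Fin 2 × Fin N) ℂ) :
    block10 N (gqspR N t p 0 * (gqspA N U * W)) =
      ((Real.sin t : ℂ)) • (U * block00 N W) -
      ((Real.cos t : ℂ)) • block10 N W := by
  ext i j
  simp [block00, block10, gqspR, gqspA, Matrix.mul_apply, Fintype.sum_prod_type,
    Fin.sum_univ_two, Matrix.kroneckerMap_apply, Matrix.one_apply, Matrix.smul_apply,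
    Matrix.sub_apply, Finset.mul_sum, Finset.sum_add_distrib, mul_assoc]
  ring

lemma gqsp_main : ∀ (d : ℕ) (P Q : Polynomial ℂ), P.natDegree ≤ d → Q.natDegree ≤ d →
    (∀ x : ℂ, ‖x‖ = 1 →
      ‖P.eval x‖ ^ 2 + ‖Q.eval x‖ ^ 2 = 1) →
    ∃ (θ φ : Fin (d + 1) → ℝ) (lam : ℝ),
      ∀ (N : ℕ) (U : Matrix (Fin N) (Fin N) ℂ),
        block00 N (gqspCircuit N d U θ φ lam) = Polynomial.aeval U P ∧
        block10 N (gqspCircuit N d U θ φ lam) = Polynomial.aeval U Q := by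
  intro d
  induction d with
  | zero =>
    intro P Q hPd hQd hPQ
    have hP1 : P = C (P.coeff 0) := Polynomial.eq_C_of_natDegree_le_zero hPd
    have hQ1 : Q = C (Q.coeff 0) := Polynomial.eq_C_of_natDegree_le_zero hQd
    set p := P.coeff 0 with hp
    set q := Q.coeff 0 with hq
    have habs : ‖p‖ ^ 2 + ‖q‖ ^ 2 = 1 := by
      have h := hPQ 1 (by simp)
      rw [hP1, hQ1] at h
      simpa using h
    have hple : ‖p‖ ≤ 1 := by
      nlinarith [norm_nonneg p, norm_nonneg q]
    have hc : Real.cos (Real.arccos (‖p‖)) = ‖p‖ :=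
      Real.cos_arccos (by linarith [norm_nonneg p]) hple
    have hsin : Real.sin (Real.arccos (‖p‖)) = ‖q‖ := by
      rw [Real.sin_arccos, show 1 - ‖p‖ ^ 2 = ‖q‖ ^ 2 by linarith]
      exact Real.sqrt_sq (norm_nonneg q)
    refine ⟨fun _ => Real.arccos (‖p‖), fun _ => p.arg - q.arg, q.arg, ?_⟩
    intro N U
    rw [gqspCircuit_zero, block00_R, block10_R]
    constructor
    · rw [hP1, Polynomial.aeval_C, Algebra.algebraMap_eq_smul_one]
      congr 1
      rw [show Complex.I * ((q.arg : ℂ) + ((p.arg - q.arg : ℝ) : ℂ)) = (p.arg : ℂ) * Complex.I by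
        push_cast; ring, hc, mul_comm]
      exact Complex.norm_mul_exp_arg_mul_I p
    · rw [hQ1, Polynomial.aeval_C, Algebra.algebraMap_eq_smul_one]
      congr 1
      rw [show Complex.I * (q.arg : ℂ) = (q.arg : ℂ) * Complex.I by ring, hsin, mul_comm]
      exact Complex.norm_mul_exp_arg_mul_I q
  | succ d ih =>
    intro P Q hPd hQd hPQ
    have horth := coeff_orth (d+1) (by omega) P Q hPd hQd hPQ
    obtain ⟨t1, p1, h1, h2⟩ :=
      angle_exists (P.coeff 0) (Q.coeff 0) (P.coeff (d+1)) (Q.coeff (d+1)) horth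
    set e := Complex.exp (-(Complex.I * p1)) with he_def
    have hEe : Complex.exp (Complex.I * (p1:ℂ)) * e = 1 := by
      rw [he_def, ← Complex.exp_add]
      simp
    have hee : e * (starRingEnd ℂ) e = 1 := exp_mul_conj p1
    have hcsC : ((Real.cos t1 : ℝ) : ℂ)^2 + ((Real.sin t1 : ℝ) : ℂ)^2 = 1 := by
      exact_mod_cast congrArg (fun r : ℝ => (r:ℂ)) (Real.cos_sq_add_sin_sq t1)
    set L : Polynomial ℂ := C (e * (Real.cos t1 : ℂ)) * P + C ((Real.sin t1 : ℝ) : ℂ) * Q with hL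
    set Q' : Polynomial ℂ := C (e * (Real.sin t1 : ℂ)) * P - C ((Real.cos t1 : ℝ) : ℂ) * Q with hQ'
    have hL0 : L.coeff 0 = 0 := by
      rw [hL, Polynomial.coeff_add, Polynomial.coeff_C_mul, Polynomial.coeff_C_mul]
      linear_combination h1
    set P' : Polynomial ℂ := L.divX with hP'
    have hXP' : Polynomial.X * P' = L := by
      have h := Polynomial.X_mul_divX_add L
      rwa [hL0, _root_.map_zero, add_zero] at h
    have hP'd : P'.natDegree ≤ d := by
      rw [Polynomial.natDegree_le_iff_coeff_eq_zero]
      intro m hm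
      rw [hP', Polynomial.coeff_divX, hL, Polynomial.coeff_add, Polynomial.coeff_C_mul,
        Polynomial.coeff_C_mul,
        Polynomial.coeff_eq_zero_of_natDegree_lt (lt_of_le_of_lt hPd (by omega)),
        Polynomial.coeff_eq_zero_of_natDegree_lt (lt_of_le_of_lt hQd (by omega))]
      ring
    have hQ'd : Q'.natDegree ≤ d := by
      rw [Polynomial.natDegree_le_iff_coeff_eq_zero]
      intro m hm
      rcases eq_or_ne m (d+1) with hm1 | hm1
      · subst hm1
        rw [hQ', Polynomial.coeff_sub, Polynomial.coeff_C_mul, Polynomial.coeff_C_mul]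
        linear_combination h2
      · rw [hQ', Polynomial.coeff_sub, Polynomial.coeff_C_mul, Polynomial.coeff_C_mul,
          Polynomial.coeff_eq_zero_of_natDegree_lt (lt_of_le_of_lt hPd (by omega)),
          Polynomial.coeff_eq_zero_of_natDegree_lt (lt_of_le_of_lt hQd (by omega))]
        ring
    have hcirc : ∀ x : ℂ, ‖x‖ = 1 →
        ‖P'.eval x‖ ^ 2 + ‖Q'.eval x‖ ^ 2 = 1 := by
      intro x hx
      have hxc : x * (starRingEnd ℂ) x = 1 := by
        rw [Complex.mul_conj]
        norm_cast
        rw [← Complex.sq_norm, hx]; norm_num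
      have hLx : L.eval x = e * (Real.cos t1 : ℂ) * P.eval x + ((Real.sin t1 : ℝ) : ℂ) * Q.eval x := by
        rw [hL]; simp [Polynomial.eval_add, Polynomial.eval_mul]
      have hQ'x : Q'.eval x = e * (Real.sin t1 : ℂ) * P.eval x - ((Real.cos t1 : ℝ) : ℂ) * Q.eval x := by
        rw [hQ']; simp [Polynomial.eval_sub, Polynomial.eval_mul]
      have hP'x : x * P'.eval x = L.eval x := by
        rw [← hXP', Polynomial.eval_mul, Polynomial.eval_X]
      have key : L.eval x * (starRingEnd ℂ) (L.eval x) + Q'.eval x * (starRingEnd ℂ) (Q'.eval x)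
          = P.eval x * (starRingEnd ℂ) (P.eval x) + Q.eval x * (starRingEnd ℂ) (Q.eval x) := by
        rw [hLx, hQ'x]
        simp only [_root_.map_add, _root_.map_mul, _root_.map_sub, Complex.conj_ofReal]
        linear_combination (((Real.cos t1 : ℝ):ℂ)^2 + ((Real.sin t1 : ℝ):ℂ)^2)
            * (P.eval x * (starRingEnd ℂ) (P.eval x)) * hee
          + (P.eval x * (starRingEnd ℂ) (P.eval x)
            + Q.eval x * (starRingEnd ℂ) (Q.eval x)) * hcsC
      have hPP' : P'.eval x * (starRingEnd ℂ) (P'.eval x) = L.eval x * (starRingEnd ℂ) (L.eval x) := by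
        rw [← hP'x, _root_.map_mul]
        linear_combination (-(P'.eval x * (starRingEnd ℂ) (P'.eval x))) * hxc
      have hfin : ((‖P'.eval x‖ ^ 2 + ‖Q'.eval x‖ ^ 2 : ℝ) : ℂ)
          = ((1 : ℝ) : ℂ) := by
        rw [Complex.ofReal_add, Complex.ofReal_pow, Complex.ofReal_pow]
        have a1 : ((‖P'.eval x‖ : ℝ) : ℂ)^2 = P'.eval x * (starRingEnd ℂ) (P'.eval x) := by
          rw [← Complex.ofReal_pow, Complex.sq_norm, Complex.mul_conj]
        have a2 : ((‖Q'.eval x‖ : ℝ) : ℂ)^2 = Q'.eval x * (starRingEnd ℂ) (Q'.eval x) := by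
          rw [← Complex.ofReal_pow, Complex.sq_norm, Complex.mul_conj]
        have a3 : ((‖P.eval x‖ : ℝ) : ℂ)^2 = P.eval x * (starRingEnd ℂ) (P.eval x) := by
          rw [← Complex.ofReal_pow, Complex.sq_norm, Complex.mul_conj]
        have a4 : ((‖Q.eval x‖ : ℝ) : ℂ)^2 = Q.eval x * (starRingEnd ℂ) (Q.eval x) := by
          rw [← Complex.ofReal_pow, Complex.sq_norm, Complex.mul_conj]
        rw [a1, a2, hPP', key, ← a3, ← a4]
        push_cast
        exact_mod_cast congrArg (fun r : ℝ => (r:ℂ)) (hPQ x hx)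
      exact_mod_cast hfin
    have hEeC : (C (Complex.exp (Complex.I * (p1:ℂ))) * C e : Polynomial ℂ) = 1 := by rw [← Polynomial.C_mul, hEe, Polynomial.C_1]
    have hcsP : (C ((Real.cos t1 : ℝ):ℂ) : Polynomial ℂ)^2 + (C ((Real.sin t1 : ℝ):ℂ))^2 = 1 := by
      rw [← Polynomial.C_pow, ← Polynomial.C_pow, ← Polynomial.C_add, hcsC, Polynomial.C_1]
    have hrecP : C (Complex.exp (Complex.I * (p1:ℂ)) * (Real.cos t1 : ℂ)) * (Polynomial.X * P')
        + C (Complex.exp (Complex.I * (p1:ℂ)) * (Real.sin t1 : ℂ)) * Q' = P := by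
      rw [hXP', hL, hQ']
      simp only [Polynomial.C_mul]
      linear_combination ((C ((Real.cos t1 : ℝ):ℂ))^2 + (C ((Real.sin t1 : ℝ):ℂ))^2) * P * hEeC
        + P * hcsP
    have hrecQ : C ((Real.sin t1 : ℝ):ℂ) * (Polynomial.X * P')
        - C ((Real.cos t1 : ℝ):ℂ) * Q' = Q := by
      rw [hXP', hL, hQ']
      simp only [Polynomial.C_mul]
      linear_combination Q * hcsP
    obtain ⟨θ', φ', lam, hIH⟩ := ih P' Q' hP'd hQ'd hcirc
    refine ⟨gqUnshift d t1 θ', gqUnshift d p1 φ', lam, ?_⟩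
    intro N U
    have hθ : (fun j => gqUnshift d t1 θ' (gqShift d j)) = θ' :=
      funext (gqUnshift_shift d t1 θ')
    have hφ : (fun j => gqUnshift d p1 φ' (gqShift d j)) = φ' :=
      funext (gqUnshift_shift d p1 φ')
    rw [gqspCircuit_succ, hθ, hφ, gqUnshift_one, gqUnshift_one]
    obtain ⟨hB0, hB1⟩ := hIH N U
    have haux : ∀ (a : ℂ) (r : Polynomial ℂ),
        Polynomial.aeval U (Polynomial.C a * r) = a • Polynomial.aeval U r := fun a r => by
      rw [_root_.map_mul, Polynomial.aeval_C, ← Algebra.smul_def]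
    have haux2 : Polynomial.aeval U (Polynomial.X * P') = U * Polynomial.aeval U P' := by
      rw [_root_.map_mul, Polynomial.aeval_X]
    have e1 : Polynomial.aeval U P =
        (Complex.exp (Complex.I * (p1:ℂ)) * (Real.cos t1 : ℂ)) • (U * Polynomial.aeval U P')
        + (Complex.exp (Complex.I * (p1:ℂ)) * (Real.sin t1 : ℂ)) • Polynomial.aeval U Q' := by
      conv_lhs => rw [← hrecP]
      rw [_root_.map_add, haux, haux, haux2]
    have e2 : Polynomial.aeval U Q =
        ((Real.sin t1 : ℝ) : ℂ) • (U * Polynomial.aeval U P')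
        - ((Real.cos t1 : ℝ) : ℂ) • Polynomial.aeval U Q' := by
      conv_lhs => rw [← hrecQ]
      rw [_root_.map_sub, haux, haux, haux2]
    constructor
    · rw [block00_RA, hB0, hB1]
      exact e1.symm
    · rw [block10_RA, hB0, hB1]
      exact e2.symm

end GQSPAux

/-- Generalized Quantum Signal Processing, converse direction (Theorem 3): for any
polynomials `P, Q` of degree at most `d` with `|P(x)|² + |Q(x)|² = 1` on the unit
circle, there are angles `θ, φ ∈ ℝ^{d+1}`, `λ ∈ ℝ` such that for every unitary `U`
the GQSP circuit has top-left block `P(U)` and bottom-left block `Q(U)`. -/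
theorem stmt_12 (d : ℕ) (P Q : Polynomial ℂ) (hPd : P.natDegree ≤ d) (hQd : Q.natDegree ≤ d)
    (hPQ : ∀ x : ℂ, ‖x‖ = 1 →
      ‖P.eval x‖ ^ 2 + ‖Q.eval x‖ ^ 2 = 1) :
    ∃ (θ φ : Fin (d + 1) → ℝ) (lam : ℝ),
      ∀ N : ℕ, 1 ≤ N → ∀ U ∈ Matrix.unitaryGroup (Fin N) ℂ,
        block00 N (gqspCircuit N d U θ φ lam) = Polynomial.aeval U P ∧
        block10 N (gqspCircuit N d U θ φ lam) = Polynomial.aeval U Q := by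
  obtain ⟨θ, φ, lam, h⟩ := gqsp_main d P Q hPd hQd hPQ
  exact ⟨θ, φ, lam, fun N _ U _ => h N U⟩
end

section
/- Let N ≥ 1, let H be an N×N Hermitian complex matrix with eigenvalues E_1,…,E_N, let L be an N×N complex matrix, and let β ≥ 0. Then |Tr(exp(−β(H + L)))| ≤ Σ_{λ=1}^{N} e^{−βE_λ} · e^{β‖L‖}, where ‖L‖ is the operator norm; equivalently, |Tr(exp(−β(H + L)))|/N ≤ e^{β‖L‖} · (Σ_λ e^{−βE_λ})/N = e^{β‖L‖}·Tr(exp(−βH))/N. -/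
open scoped Matrix.Norms.L2Operator
open scoped InnerProductSpace
open scoped Matrix

theorem schur_flag (n : ℕ) : ∀ (E : Type) [inst : NormedAddCommGroup E]
    [inst2 : InnerProductSpace ℂ E], Module.finrank ℂ E = n →
    ∀ (f : E →ₗ[ℂ] E),
    ∃ u : Fin n → E, Orthonormal ℂ u ∧ ∀ i j : Fin n, i < j → ⟪u j, f (u i)⟫_ℂ = 0 := by
  induction n with
  | zero =>
    intro E _ _ _ f
    exact ⟨finZeroElim, ⟨fun i => i.elim0, fun i => i.elim0⟩, fun i => i.elim0⟩
  | succ n ih =>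
    intro E _ _ hE f
    haveI : FiniteDimensional ℂ E := FiniteDimensional.of_finrank_pos (by omega)
    haveI : Nontrivial E := Module.nontrivial_of_finrank_pos (R := ℂ) (by omega)
    obtain ⟨μ, hμ⟩ := Module.End.exists_eigenvalue (LinearMap.adjoint f : Module.End ℂ E)
    obtain ⟨w₀, hw₀⟩ := hμ.exists_hasEigenvector
    set w : E := ((‖w₀‖⁻¹ : ℝ) : ℂ) • w₀ with hw_def
    have hw1 : ‖w‖ = 1 := by
      have hz : ‖w₀‖ ≠ 0 := norm_ne_zero_iff.mpr hw₀.2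
      rw [hw_def, norm_smul]
      simp [inv_mul_cancel₀ hz]
    have hwne : w ≠ 0 := by
      intro h; rw [h, norm_zero] at hw1; exact one_ne_zero hw1.symm
    have hadj : LinearMap.adjoint f w = μ • w := by
      rw [hw_def, map_smul, hw₀.apply_eq_smul, smul_comm]
    have hKw : ∀ x : E, x ∈ (ℂ ∙ w)ᗮ → ⟪w, x⟫_ℂ = 0 := by
      intro x hx
      exact (Submodule.mem_orthogonal _ _).1 hx w (Submodule.mem_span_singleton_self w)
    have hKrank : Module.finrank ℂ ((ℂ ∙ w)ᗮ : Submodule ℂ E) = n := by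
      have h1 := Submodule.finrank_add_finrank_orthogonal (K := (ℂ ∙ w)) (𝕜 := ℂ)
      rw [finrank_span_singleton hwne] at h1
      omega
    have hinv : ∀ x ∈ ((ℂ ∙ w)ᗮ : Submodule ℂ E), f x ∈ ((ℂ ∙ w)ᗮ : Submodule ℂ E) := by
      intro x hx
      rw [Submodule.mem_orthogonal]
      intro y hy
      obtain ⟨c, rfl⟩ := Submodule.mem_span_singleton.mp hy
      rw [inner_smul_left]
      have hfx : ⟪w, f x⟫_ℂ = 0 := by
        rw [← LinearMap.adjoint_inner_left, hadj, inner_smul_left, hKw x hx, mul_zero]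
      rw [hfx, mul_zero]
    set g := f.restrict hinv with hg_def
    obtain ⟨u', hon', htri'⟩ := ih ((ℂ ∙ w)ᗮ : Submodule ℂ E) hKrank g
    set u : Fin (n+1) → E := Fin.snoc (fun i => ((u' i : E))) w with hu_def
    have husnoc : ∀ i : Fin n, u i.castSucc = (u' i : E) := fun i => Fin.snoc_castSucc _ _ _
    have hulast : u (Fin.last n) = w := Fin.snoc_last _ _
    have hKw' : ∀ x : ((ℂ ∙ w)ᗮ : Submodule ℂ E), ⟪w, (x : E)⟫_ℂ = 0 := fun x => hKw x x.2
    refine ⟨u, ?_, ?_⟩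
    · rw [orthonormal_iff_ite]
      intro i j
      induction i using Fin.lastCases with
      | last =>
        induction j using Fin.lastCases with
        | last =>
          rw [hulast, if_pos rfl, @inner_self_eq_norm_sq_to_K ℂ, hw1]
          norm_num
        | cast j =>
          rw [hulast, husnoc, hKw' (u' j),
            if_neg (by have := j.isLt; simp [Fin.ext_iff]; omega)]
      | cast i =>
        induction j using Fin.lastCases with
        | last =>
          rw [hulast, husnoc, ← inner_conj_symm, hKw' (u' i), map_zero,
            if_neg (by have := i.isLt; simp [Fin.ext_iff]; omega)]
        | cast j =>
          rw [husnoc, husnoc, ← Submodule.coe_inner, orthonormal_iff_ite.mp hon' i j]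
          simp [Fin.ext_iff]
    · intro i j hij
      induction i using Fin.lastCases with
      | last => exact absurd hij (not_lt.mpr (Fin.le_last j))
      | cast i =>
        have hfu : f (u i.castSucc) = ((g (u' i) : E)) := by
          rw [husnoc, LinearMap.restrict_coe_apply]
        induction j using Fin.lastCases with
        | last => rw [hulast, hfu]; exact hKw' (g (u' i))
        | cast j =>
          rw [husnoc, hfu, ← Submodule.coe_inner]
          exact htri' i j (Fin.castSucc_lt_castSucc_iff.mp hij)

theorem trace_exp_triangular {n : ℕ} (T : Matrix (Fin n) (Fin n) ℂ)
    (hT : ∀ i j : Fin n, j < i → T i j = 0) :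
    Matrix.trace (NormedSpace.exp T) = ∑ i : Fin n, Complex.exp (T i i) := by
  haveI : CompleteSpace (Matrix (Fin n) (Fin n) ℂ) := FiniteDimensional.complete ℂ _
  -- powers of T are triangular with diagonal powers
  have htri : ∀ k : ℕ, ∀ i j : Fin n, j < i → (T ^ k) i j = 0 := by
    intro k
    induction k with
    | zero => intro i j hij; simp [Matrix.one_apply, Fin.ne_of_gt hij]
    | succ k ihk =>
      intro i j hij
      rw [pow_succ, Matrix.mul_apply]
      apply Finset.sum_eq_zero
      intro l _
      rcases lt_or_ge l i with hl | hl
      · rw [ihk i l hl, zero_mul]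
      · have : j < l := lt_of_lt_of_le hij hl
        rw [hT l j this, mul_zero]
  have hdiag : ∀ k : ℕ, ∀ i : Fin n, (T ^ k) i i = (T i i) ^ k := by
    intro k
    induction k with
    | zero => intro i; simp [Matrix.one_apply]
    | succ k ihk =>
      intro i
      rw [pow_succ, Matrix.mul_apply, Finset.sum_eq_single i]
      · rw [ihk i, pow_succ]
      · intro l _ hl
        rcases lt_or_gt_of_ne hl with h | h
        · rw [htri k i l h, zero_mul]
        · rw [hT l i h, mul_zero]
      · intro h; exact absurd (Finset.mem_univ i) h
  -- trace of exp
  have hsum : Summable fun k : ℕ => (((Nat.factorial k) : ℂ))⁻¹ • T ^ k :=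
    NormedSpace.expSeries_summable' (𝕂 := ℂ) T
  have hmap : Matrix.trace (NormedSpace.exp T)
      = ∑' k : ℕ, (((Nat.factorial k) : ℂ))⁻¹ • Matrix.trace (T ^ k) := by
    rw [NormedSpace.exp_eq_tsum ℂ]
    have := ((Matrix.traceLinearMap (Fin n) ℂ ℂ).toContinuousLinearMap).map_tsum hsum
    simpa using this
  rw [hmap]
  have htr : ∀ k : ℕ, Matrix.trace (T ^ k) = ∑ i : Fin n, (T i i) ^ k := by
    intro k; rw [Matrix.trace]; exact Finset.sum_congr rfl fun i _ => hdiag k i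
  calc (∑' k : ℕ, (((Nat.factorial k) : ℂ))⁻¹ • Matrix.trace (T ^ k))
      = ∑' k : ℕ, ∑ i : Fin n, (((Nat.factorial k) : ℂ))⁻¹ • (T i i) ^ k := by
        refine tsum_congr fun k => ?_
        rw [htr k, Finset.smul_sum]
    _ = ∑ i : Fin n, ∑' k : ℕ, (((Nat.factorial k) : ℂ))⁻¹ • (T i i) ^ k := by
        refine Summable.tsum_finsetSum fun i _ => ?_
        exact NormedSpace.expSeries_summable' (𝕂 := ℂ) (T i i)
    _ = ∑ i : Fin n, Complex.exp (T i i) := by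
        refine Finset.sum_congr rfl fun i _ => ?_
        rw [Complex.exp_eq_exp_ℂ, NormedSpace.exp_eq_tsum ℂ]


open Finset in
theorem jensen_part (N : ℕ) (H : Matrix (Fin N) (Fin N) ℂ) (hH : H.IsHermitian)
    (U : Matrix (Fin N) (Fin N) ℂ) (hUH : Uᴴ * U = 1) (hU1 : U * Uᴴ = 1)
    (β : ℝ) :
    ∑ i : Fin N, Real.exp (-β * ((Uᴴ * H * U) i i).re) ≤
      ∑ j : Fin N, Real.exp (-β * hH.eigenvalues j) := by
  set V : Matrix (Fin N) (Fin N) ℂ := (hH.eigenvectorUnitary : Matrix (Fin N) (Fin N) ℂ)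
    with hV_def
  have hVV : V * Vᴴ = 1 := by
    rw [hV_def, ← Matrix.star_eq_conjTranspose]
    exact Unitary.mul_star_self_of_mem hH.eigenvectorUnitary.2
  set W : Matrix (Fin N) (Fin N) ℂ := Vᴴ * U with hW_def
  have hWH : Wᴴ = Uᴴ * V := by
    rw [hW_def, Matrix.conjTranspose_mul, Matrix.conjTranspose_conjTranspose]
  have hW1 : Wᴴ * W = 1 := by
    rw [hWH, hW_def]
    calc Uᴴ * V * (Vᴴ * U) = Uᴴ * (V * Vᴴ) * U := by noncomm_ring
      _ = 1 := by rw [hVV, Matrix.mul_one, hUH]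
  have hW2 : W * Wᴴ = 1 := mul_eq_one_comm.mp hW1
  set d : Fin N → ℂ := fun j => ((hH.eigenvalues j : ℝ) : ℂ) with hd_def
  have hRW : Uᴴ * H * U = Wᴴ * Matrix.diagonal d * W := by
    have hspec : H = V * Matrix.diagonal d * Vᴴ := by
      have := hH.spectral_theorem
      rw [← Matrix.star_eq_conjTranspose]
      exact this
    rw [hspec, hWH, hW_def]
    noncomm_ring
  set w : Fin N → Fin N → ℝ := fun i j => Complex.normSq (W j i) with hw_def
  have hterm : ∀ i : Fin N, ((Wᴴ * Matrix.diagonal d * W) i i) =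
      ∑ j, ((w i j * hH.eigenvalues j : ℝ) : ℂ) := by
    intro i
    rw [Matrix.mul_apply]
    refine Finset.sum_congr rfl fun j _ => ?_
    rw [Matrix.mul_diagonal, Matrix.conjTranspose_apply, hd_def, hw_def]
    simp only [Complex.star_def]
    rw [mul_comm ((starRingEnd ℂ) (W j i)) _, mul_assoc,
      mul_comm ((starRingEnd ℂ) (W j i)) (W j i), Complex.mul_conj]
    push_cast
    ring
  have hRdiag : ∀ i : Fin N, ((Uᴴ * H * U) i i).re = ∑ j, w i j * hH.eigenvalues j := by
    intro i
    rw [hRW, hterm i, Complex.re_sum]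
    refine Finset.sum_congr rfl fun j _ => ?_
    exact Complex.ofReal_re _
  have hrow : ∀ i : Fin N, ∑ j, w i j = 1 := by
    intro i
    have h2 : ((Wᴴ * W) i i) = 1 := by rw [hW1]; simp [Matrix.one_apply]
    rw [Matrix.mul_apply] at h2
    have h3 := congrArg Complex.re h2
    rw [Complex.re_sum] at h3
    simp only [Complex.one_re] at h3
    rw [← h3]
    refine Finset.sum_congr rfl fun j _ => ?_
    rw [Matrix.conjTranspose_apply, hw_def]
    simp only [Complex.star_def]
    rw [mul_comm ((starRingEnd ℂ) (W j i)) (W j i), Complex.mul_conj]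
    exact (Complex.ofReal_re _).symm
  have hcol : ∀ j : Fin N, ∑ i, w i j = 1 := by
    intro j
    have h2 : ((W * Wᴴ) j j) = 1 := by rw [hW2]; simp [Matrix.one_apply]
    rw [Matrix.mul_apply] at h2
    have h3 := congrArg Complex.re h2
    rw [Complex.re_sum] at h3
    simp only [Complex.one_re] at h3
    rw [← h3]
    refine Finset.sum_congr rfl fun i _ => ?_
    rw [Matrix.conjTranspose_apply, hw_def]
    simp only [Complex.star_def]
    rw [Complex.mul_conj]
    exact (Complex.ofReal_re _).symm
  have hjen : ∀ i : Fin N, Real.exp (-β * ((Uᴴ * H * U) i i).re) ≤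
      ∑ j, w i j * Real.exp (-β * hH.eigenvalues j) := by
    intro i
    have h0 : ∀ j ∈ (univ : Finset (Fin N)), 0 ≤ w i j := fun j _ => Complex.normSq_nonneg _
    have h1 : ∑ j ∈ (univ : Finset (Fin N)), w i j = 1 := hrow i
    have hmem : ∀ j ∈ (univ : Finset (Fin N)),
        -β * hH.eigenvalues j ∈ (Set.univ : Set ℝ) := fun _ _ => trivial
    have hj := convexOn_exp.map_sum_le h0 h1 hmem
    have harg : -β * ((Uᴴ * H * U) i i).re
        = ∑ j, w i j • (-β * hH.eigenvalues j) := by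
      rw [hRdiag i, Finset.mul_sum]
      exact Finset.sum_congr rfl fun j _ => by simp [smul_eq_mul]; ring
    rw [harg]
    simpa [smul_eq_mul] using hj
  calc ∑ i : Fin N, Real.exp (-β * ((Uᴴ * H * U) i i).re)
      ≤ ∑ i : Fin N, ∑ j, w i j * Real.exp (-β * hH.eigenvalues j) :=
        Finset.sum_le_sum fun i _ => hjen i
    _ = ∑ j : Fin N, (∑ i, w i j) * Real.exp (-β * hH.eigenvalues j) := by
        rw [Finset.sum_comm]
        exact Finset.sum_congr rfl fun j _ => by rw [Finset.sum_mul]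
    _ = ∑ j : Fin N, Real.exp (-β * hH.eigenvalues j) := by
        refine Finset.sum_congr rfl fun j _ => ?_
        rw [hcol j, one_mul]

open Finset in
/-- Eigenvalue form of the perturbed-trace bound: for `H` Hermitian with eigenvalues
`E_λ`, `L` arbitrary and `β ≥ 0`,
`|Tr(exp(-β(H+L)))| ≤ (∑_λ e^{-β E_λ}) e^{β‖L‖} = e^{β‖L‖} Tr(exp(-βH))`. -/
theorem stmt_18 (N : ℕ) (hN : 1 ≤ N) (H L : Matrix (Fin N) (Fin N) ℂ)
    (hH : H.IsHermitian) (β : ℝ) (hβ : 0 ≤ β) :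
    ‖Matrix.trace (NormedSpace.exp ((-(β : ℂ)) • (H + L)))‖ ≤
      (∑ lam : Fin N, Real.exp (-β * hH.eigenvalues lam)) * Real.exp (β * ‖L‖) := by
  haveI : CompleteSpace (Matrix (Fin N) (Fin N) ℂ) := FiniteDimensional.complete ℂ _
  set M : Matrix (Fin N) (Fin N) ℂ := (-(β : ℂ)) • (H + L) with hM_def
  obtain ⟨u, hon, htri⟩ := schur_flag N (EuclideanSpace ℂ (Fin N))
    finrank_euclideanSpace_fin (Matrix.toEuclideanLin M)
  set U : Matrix (Fin N) (Fin N) ℂ := Matrix.of fun i j => u j i with hU_def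
  have hUe : ∀ i j, U i j = u j i := fun _ _ => rfl
  have hinner : ∀ (x y : EuclideanSpace ℂ (Fin N)),
      ⟪x, y⟫_ℂ = ∑ k : Fin N, (starRingEnd ℂ) (x k) * y k := by
    intro x y
    simp [PiLp.inner_apply, RCLike.inner_apply]
    exact Finset.sum_congr rfl fun _ _ => mul_comm _ _
  have hUH : Uᴴ * U = 1 := by
    ext i j
    rw [Matrix.mul_apply, Matrix.one_apply]
    have := orthonormal_iff_ite.mp hon i j
    rw [hinner] at this
    simpa [Matrix.conjTranspose_apply, hUe] using this
  have hU1 : U * Uᴴ = 1 := mul_eq_one_comm.mp hUH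
  set T : Matrix (Fin N) (Fin N) ℂ := Uᴴ * M * U with hT_def
  -- entries of conjugated matrices are inner products
  have hconj_entry : ∀ (A : Matrix (Fin N) (Fin N) ℂ) (i j : Fin N),
      (Uᴴ * A * U) i j = ⟪u i, Matrix.toEuclideanLin A (u j)⟫_ℂ := by
    intro A i j
    have hA : ∀ l, (Matrix.toEuclideanLin A (u j)) l = ∑ k, A l k * (u j) k := by
      intro l
      rw [Matrix.toEuclideanLin_apply]
      simp [Matrix.mulVec, dotProduct]
    rw [hinner]
    simp only [hA, Matrix.mul_apply, Matrix.conjTranspose_apply, hUe, starRingEnd_apply,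
      Finset.sum_mul, Finset.mul_sum]
    rw [Finset.sum_comm]
    refine Finset.sum_congr rfl fun k _ => Finset.sum_congr rfl fun l _ => by ring
  have htriT : ∀ i j : Fin N, j < i → T i j = 0 := by
    intro i j hij
    rw [hT_def, hconj_entry M i j]
    exact htri j i hij
  -- trace identity
  have htrace : Matrix.trace (NormedSpace.exp M) = ∑ i : Fin N, Complex.exp (T i i) := by
    have hMT : M = U * T * Uᴴ := by
      have h1 : U * (Uᴴ * M * U) * Uᴴ = (U * Uᴴ) * M * (U * Uᴴ) := by
        noncomm_ring
      rw [hT_def, h1, hU1, one_mul, mul_one]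
    set Uu : (Matrix (Fin N) (Fin N) ℂ)ˣ := ⟨U, Uᴴ, hU1, hUH⟩ with hUu_def
    have hconj : NormedSpace.exp M = U * NormedSpace.exp T * Uᴴ := by
      have := Matrix.exp_units_conj Uu T
      rw [hMT]
      simpa [hUu_def] using this
    rw [hconj, Matrix.trace_mul_cycle, hUH, Matrix.one_mul]
    exact trace_exp_triangular T htriT
  -- the diagonal of T
  set R : Matrix (Fin N) (Fin N) ℂ := Uᴴ * H * U with hR_def
  set S : Matrix (Fin N) (Fin N) ℂ := Uᴴ * L * U with hS_def
  have hTRS : T = (-(β : ℂ)) • (R + S) := by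
    rw [hT_def, hR_def, hS_def, hM_def, Matrix.mul_smul, Matrix.smul_mul,
      Matrix.mul_add, Matrix.add_mul]
  -- bound on S diagonal
  have hSdiag : ∀ i : Fin N, ‖S i i‖ ≤ ‖L‖ := by
    intro i
    have h1 : S i i = ⟪u i, Matrix.toEuclideanLin L (u i)⟫_ℂ := hconj_entry L i i
    rw [h1]
    calc ‖⟪u i, Matrix.toEuclideanLin L (u i)⟫_ℂ‖
        ≤ ‖u i‖ * ‖Matrix.toEuclideanLin L (u i)‖ := norm_inner_le_norm _ _
      _ ≤ ‖u i‖ * (‖L‖ * ‖u i‖) := by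
          refine mul_le_mul_of_nonneg_left ?_ (norm_nonneg _)
          exact Matrix.l2_opNorm_mulVec L (u i)
      _ = ‖L‖ := by rw [hon.1 i]; ring
  -- re of T diagonal
  have hTre : ∀ i : Fin N, (T i i).re ≤ -β * (R i i).re + β * ‖L‖ := by
    intro i
    have h1 : T i i = (-(β : ℂ)) * (R i i + S i i) := by rw [hTRS]; simp
    have h2 : (T i i).re = -β * ((R i i).re + (S i i).re) := by
      rw [h1]; simp [Complex.mul_re]; try ring
    have h3 : -((S i i).re) ≤ ‖L‖ := by
      have := Complex.abs_re_le_norm (S i i)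
      have h4 := hSdiag i
      cases abs_le.mp this with
      | intro hlo hhi => linarith
    nlinarith [hSdiag i, hβ]
  -- spectral / Jensen part
  have hjensen : ∑ i : Fin N, Real.exp (-β * (R i i).re) ≤
      ∑ j : Fin N, Real.exp (-β * hH.eigenvalues j) := by
    rw [hR_def]
    exact jensen_part N H hH U hUH hU1 β
  -- final chain
  calc ‖Matrix.trace (NormedSpace.exp M)‖
      = ‖∑ i : Fin N, Complex.exp (T i i)‖ := by rw [htrace]
    _ ≤ ∑ i : Fin N, ‖Complex.exp (T i i)‖ :=
        norm_sum_le _ _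
    _ = ∑ i : Fin N, Real.exp ((T i i).re) := by
        refine Finset.sum_congr rfl fun i _ => ?_
        exact Complex.norm_exp _
    _ ≤ ∑ i : Fin N, Real.exp (-β * (R i i).re) * Real.exp (β * ‖L‖) := by
        refine Finset.sum_le_sum fun i _ => ?_
        rw [← Real.exp_add]
        exact Real.exp_le_exp.mpr (hTre i)
    _ = (∑ i : Fin N, Real.exp (-β * (R i i).re)) * Real.exp (β * ‖L‖) := by
        rw [Finset.sum_mul]
    _ ≤ (∑ lam : Fin N, Real.exp (-β * hH.eigenvalues lam)) * Real.exp (β * ‖L‖) := by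
        exact mul_le_mul_of_nonneg_right hjensen (Real.exp_nonneg _)
end
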